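/- Let P be the transition matrix of the pure-drift Markov chain on the graph consisting of k disjoint arcs of lengths L_1, ..., L_k (directed paths from a_i to b_i with all transition probabilities 1 along the arc, and from each b_i transitions with probability 1/k to each a_j). Then a complex number μ ≠ 0 is an eigenvalue of P if and only if the sum over i of μ^{-L_i} equals k. -/

import Mathlib

/-- The pure-drift transition matrix on `k` disjoint arcs of lengths `L i`.
Node `⟨i, j⟩` is the `j`-th node of arc `i`; `a_i = ⟨i, 0⟩` and
`b_i = ⟨i, L i - 1⟩`. From a non-terminal node there is a transition of
probability `1` to its successor on the arc, and from each `b_i` transitions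
of probability `1/k` to every `a_j`. -/
noncomputable def pureDriftMatrix (k : ℕ) (L : Fin k → ℕ) :
    Matrix ((i : Fin k) × Fin (L i)) ((i : Fin k) × Fin (L i)) ℂ :=
  fun p q =>
    if p.2.val + 1 < L p.1 then
      (if q.1 = p.1 ∧ q.2.val = p.2.val + 1 then 1 else 0)
    else
      (if q.2.val = 0 then (1 : ℂ) / k else 0)


lemma pd_mulVec_interior (k : ℕ) (L : Fin k → ℕ) (v : ((i : Fin k) × Fin (L i)) → ℂ)
    (p : (i : Fin k) × Fin (L i)) (hp : p.2.val + 1 < L p.1) :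
    (pureDriftMatrix k L).mulVec v p = v ⟨p.1, ⟨p.2.val + 1, hp⟩⟩ := by
  unfold pureDriftMatrix Matrix.mulVec dotProduct
  simp only [hp, if_true]
  rw [Finset.sum_eq_single (⟨p.1, ⟨p.2.val + 1, hp⟩⟩ : (i : Fin k) × Fin (L i))]
  · simp
  · rintro ⟨qi, qj⟩ - hq
    rw [if_neg, zero_mul]
    rintro ⟨h1, h2⟩
    apply hq
    subst h1
    exact congrArg _ (Fin.ext h2)
  · intro h; exact absurd (Finset.mem_univ _) h

lemma pd_mulVec_terminal (k : ℕ) (L : Fin k → ℕ) (hL : ∀ i, 1 ≤ L i)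
    (v : ((i : Fin k) × Fin (L i)) → ℂ)
    (p : (i : Fin k) × Fin (L i)) (hp : ¬ (p.2.val + 1 < L p.1)) :
    (pureDriftMatrix k L).mulVec v p = (1 / k) * ∑ i, v ⟨i, ⟨0, hL i⟩⟩ := by
  unfold pureDriftMatrix Matrix.mulVec dotProduct
  simp only [hp, if_false]
  rw [Finset.mul_sum, ← Finset.univ_sigma_univ, Finset.sum_sigma]
  refine Finset.sum_congr rfl fun i _ => ?_
  rw [Finset.sum_eq_single (⟨0, hL i⟩ : Fin (L i))]
  · simp
  · intro j _ hj
    rw [if_neg (fun h => hj (Fin.ext h)), zero_mul]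
  · intro h; exact absurd (Finset.mem_univ _) h

/-- `μ ≠ 0` is an eigenvalue of the pure-drift chain iff `∑ i, μ^{-L_i} = k`. -/
theorem stmt_5 (k : ℕ) (hk : 1 ≤ k) (L : Fin k → ℕ) (hL : ∀ i, 1 ≤ L i)
    (μ : ℂ) (hμ : μ ≠ 0) :
    Module.End.HasEigenvalue (Matrix.toLin' (pureDriftMatrix k L)) μ ↔
      ∑ i, μ ^ (-(L i : ℤ)) = (k : ℂ) := by
  have hk0 : (k : ℂ) ≠ 0 := Nat.cast_ne_zero.mpr (by omega)
  constructor
  · intro h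
    obtain ⟨v, hmem, hv0⟩ := h.exists_hasEigenvector
    rw [Module.End.mem_eigenspace_iff] at hmem
    have heq : ∀ p, (pureDriftMatrix k L).mulVec v p = μ * v p := by
      intro p
      have := congrFun hmem p
      rwa [Matrix.toLin'_apply] at this
    set c : Fin k → ℂ := fun i => v ⟨i, ⟨0, hL i⟩⟩ with hc
    set S : ℂ := ∑ i, c i with hS
    have hval : ∀ (i : Fin k) (m : ℕ) (hm : m < L i),
        v ⟨i, ⟨m, hm⟩⟩ = μ ^ m * c i := by
      intro i m
      induction m with
      | zero => intro hm; simp [hc]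
      | succ n ih =>
        intro hm
        have hn : n < L i := by omega
        have h1 := heq ⟨i, ⟨n, hn⟩⟩
        rw [pd_mulVec_interior k L v ⟨i, ⟨n, hn⟩⟩ hm] at h1
        rw [h1, ih hn, pow_succ]
        ring
    have hterm : ∀ i : Fin k, (1 / k : ℂ) * S = μ ^ (L i) * c i := by
      intro i
      have hlt : L i - 1 < L i := by have := hL i; omega
      have hnot : ¬ ((L i - 1) + 1 < L i) := by omega
      have h1 := heq ⟨i, ⟨L i - 1, hlt⟩⟩
      rw [pd_mulVec_terminal k L hL v ⟨i, ⟨L i - 1, hlt⟩⟩ hnot] at h1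
      rw [h1, hval i (L i - 1) hlt, ← mul_assoc, ← pow_succ']
      congr 2
      omega
    have hcne : ∃ i, c i ≠ 0 := by
      by_contra hall
      push_neg at hall
      apply hv0
      funext p
      have : v ⟨p.1, ⟨p.2.val, p.2.isLt⟩⟩ = μ ^ p.2.val * c p.1 := hval p.1 p.2.val p.2.isLt
      simpa [hall p.1] using this
    obtain ⟨i0, hi0⟩ := hcne
    have hSne : S ≠ 0 := by
      intro h0
      have := hterm i0
      rw [h0, mul_zero] at this
      exact hi0 (by
        have hpne : (μ : ℂ) ^ (L i0) ≠ 0 := pow_ne_zero _ hμ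
        field_simp at this
        exact (mul_eq_zero.mp this.symm).resolve_left hpne)
    have h1 : ∀ i, μ ^ (-(L i : ℤ)) * S = k * c i := by
      intro i
      have h := hterm i
      have hpne : (μ : ℂ) ^ (L i) ≠ 0 := pow_ne_zero _ hμ
      rw [zpow_neg, zpow_natCast]
      field_simp at h ⊢
      linear_combination h
    have h2 : (∑ i, μ ^ (-(L i : ℤ))) * S = (k : ℂ) * S := by
      rw [Finset.sum_mul, hS, Finset.mul_sum]
      exact Finset.sum_congr rfl fun i _ => h1 i
    exact mul_right_cancel₀ hSne h2
  · intro hsum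
    set v : ((i : Fin k) × Fin (L i)) → ℂ :=
      fun p => μ ^ ((p.2.val : ℤ) - (L p.1 : ℤ)) with hv
    have hv0 : v ≠ 0 := by
      intro h0
      have : v ⟨⟨0, by omega⟩, ⟨0, hL _⟩⟩ = 0 := by rw [h0]; rfl
      exact zpow_ne_zero _ hμ this
    refine Module.End.hasEigenvalue_of_hasEigenvector (x := v)
      ⟨Module.End.mem_eigenspace_iff.mpr ?_, hv0⟩
    funext p
    rw [Matrix.toLin'_apply]
    show (pureDriftMatrix k L).mulVec v p = μ * v p
    by_cases hp : p.2.val + 1 < L p.1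
    · rw [pd_mulVec_interior k L v p hp]
      show μ ^ (((p.2.val + 1 : ℕ) : ℤ) - (L p.1 : ℤ)) = μ * μ ^ ((p.2.val : ℤ) - (L p.1 : ℤ))
      rw [mul_comm, ← zpow_add_one₀ hμ]
      congr 1
      push_cast
      ring
    · rw [pd_mulVec_terminal k L hL v p hp]
      have hpv : (p.2.val : ℤ) + 1 = (L p.1 : ℤ) := by
        have := p.2.isLt; omega
      have hrhs : μ * v p = 1 := by
        show μ * μ ^ ((p.2.val : ℤ) - (L p.1 : ℤ)) = 1
        rw [mul_comm, ← zpow_add_one₀ hμ,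
          show (p.2.val : ℤ) - (L p.1 : ℤ) + 1 = 0 by omega, zpow_zero]
      rw [hrhs]
      have : ∑ i, v ⟨i, ⟨0, hL i⟩⟩ = (k : ℂ) := by
        rw [← hsum]
        refine Finset.sum_congr rfl fun i _ => ?_
        show μ ^ (((0:ℕ) : ℤ) - (L i : ℤ)) = _
        congr 1
        push_cast; ring
      rw [this]
      field_simp
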